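/- (Diophantine core of Theorem 4.12.) For k ∈ {0, 1, 2, 23, 24}, consider the integer solutions (d, m) of the equation (2d+3)² − 25(2m+1)² + 8km = −8. There are no solutions when k ∈ {0, 2, 23}; the solutions for k = 1 are exactly (1, −1) and (−4, −1); and the solutions for k = 24 are exactly (−4, 1) and (1, 1). -/
import Mathlib

lemma dio_aux (a b N : ℤ) (hN : 0 < N) (h : (a - b) * (a + b) = N) :
    -N ≤ a - b ∧ a - b ≤ N ∧ -N ≤ a + b ∧ a + b ≤ N := by
  have h1 : a - b ∣ N := ⟨a + b, h.symm⟩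
  have h2 : a + b ∣ N := ⟨a - b, by linarith [mul_comm (a - b) (a + b)]⟩
  refine ⟨?_, Int.le_of_dvd hN h1, ?_, Int.le_of_dvd hN h2⟩
  · have := Int.le_of_dvd hN ((neg_dvd).2 h1); linarith
  · have := Int.le_of_dvd hN ((neg_dvd).2 h2); linarith

theorem diophantine_25 :
    (∀ k ∈ ({0, 2, 23} : Set ℤ), ∀ d m : ℤ,
        (2 * d + 3) ^ 2 - 25 * (2 * m + 1) ^ 2 + 8 * k * m ≠ -8) ∧
    (∀ d m : ℤ,
        (2 * d + 3) ^ 2 - 25 * (2 * m + 1) ^ 2 + 8 * 1 * m = -8 ↔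
          (d, m) ∈ ({(1, -1), (-4, -1)} : Set (ℤ × ℤ))) ∧
    (∀ d m : ℤ,
        (2 * d + 3) ^ 2 - 25 * (2 * m + 1) ^ 2 + 8 * 24 * m = -8 ↔
          (d, m) ∈ ({(-4, 1), (1, 1)} : Set (ℤ × ℤ))) := by
  refine ⟨?_, ?_, ?_⟩
  · rintro k hk d m h
    rcases hk with rfl | rfl | rfl
    · have key : ((10*m+5) - (2*d+3)) * ((10*m+5) + (2*d+3)) = 8 := by
        linear_combination -h
      obtain ⟨b1, b2, b3, b4⟩ := dio_aux _ _ _ (by norm_num) key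
      have hm : -2 ≤ m ∧ m ≤ 1 := by omega
      have hd : -7 ≤ d ∧ d ≤ 5 := by omega
      obtain ⟨hm1, hm2⟩ := hm; obtain ⟨hd1, hd2⟩ := hd
      interval_cases m <;> interval_cases d <;> omega
    · have key : ((50*m+21) - (10*d+15)) * ((50*m+21) + (10*d+15)) = 16 := by
        linear_combination -25 * h
      obtain ⟨b1, b2, b3, b4⟩ := dio_aux _ _ _ (by norm_num) key
      omega
    · have key : ((50*m-21) - (10*d+15)) * ((50*m-21) + (10*d+15)) = 16 := by
        linear_combination -25 * h
      obtain ⟨b1, b2, b3, b4⟩ := dio_aux _ _ _ (by norm_num) key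
      omega
  · intro d m
    constructor
    · intro h
      have key : ((50*m+23) - (10*d+15)) * ((50*m+23) + (10*d+15)) = 104 := by
        linear_combination -25 * h
      obtain ⟨b1, b2, b3, b4⟩ := dio_aux _ _ _ (by norm_num) key
      have hm : -3 ≤ m ∧ m ≤ 2 := by omega
      have hd : -12 ≤ d ∧ d ≤ 10 := by omega
      obtain ⟨hm1, hm2⟩ := hm; obtain ⟨hd1, hd2⟩ := hd
      simp only [Set.mem_insert_iff, Set.mem_singleton_iff, Prod.mk.injEq]
      interval_cases m <;> interval_cases d <;> omega
    · intro h
      simp only [Set.mem_insert_iff, Set.mem_singleton_iff, Prod.mk.injEq] at h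
      rcases h with ⟨rfl, rfl⟩ | ⟨rfl, rfl⟩ <;> norm_num
  · intro d m
    constructor
    · intro h
      have key : ((50*m-23) - (10*d+15)) * ((50*m-23) + (10*d+15)) = 104 := by
        linear_combination -25 * h
      obtain ⟨b1, b2, b3, b4⟩ := dio_aux _ _ _ (by norm_num) key
      have hm : -2 ≤ m ∧ m ≤ 3 := by omega
      have hd : -12 ≤ d ∧ d ≤ 10 := by omega
      obtain ⟨hm1, hm2⟩ := hm; obtain ⟨hd1, hd2⟩ := hd
      simp only [Set.mem_insert_iff, Set.mem_singleton_iff, Prod.mk.injEq]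
      interval_cases m <;> interval_cases d <;> omega
    · intro h
      simp only [Set.mem_insert_iff, Set.mem_singleton_iff, Prod.mk.injEq] at h
      rcases h with ⟨rfl, rfl⟩ | ⟨rfl, rfl⟩ <;> norm_num
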